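/- Let C be a real symmetric positive definite n×n matrix, b ∈ ℝⁿ, and 1 ≤ k ≤ n. Let S ⊆ {1,…,n} with |S| = k be an 'oblivious' set, i.e., |b_i| ≥ |b_j| for every i ∈ S and j ∉ S. Then R²(S) ≥ (λmin(C,k)/λmax(C,k)) · OPT, where OPT = max over subsets T of size k of R²(T). -/

import Mathlib

open scoped Matrix

/-- The smallest eigenvalue of a real symmetric (Hermitian) matrix. -/
noncomputable def lambdaMin {m : Type*} [Fintype m] [DecidableEq m] (A : Matrix m m ℝ) : ℝ :=
  if hA : A.IsHermitian then ⨅ i, hA.eigenvalues i else 0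

/-- The largest eigenvalue of a real symmetric (Hermitian) matrix. -/
noncomputable def lambdaMax {m : Type*} [Fintype m] [DecidableEq m] (A : Matrix m m ℝ) : ℝ :=
  if hA : A.IsHermitian then ⨆ i, hA.eigenvalues i else 0

/-- The principal submatrix of `C` on rows and columns in `S`. -/
def subMat {ι : Type*} (C : Matrix ι ι ℝ) (S : Finset ι) : Matrix S S ℝ :=
  fun i j => C i j

/-- `R²(S) = b_Sᵀ (C_S)⁻¹ b_S`, the squared multiple correlation. -/
noncomputable def R2 {ι : Type*} [Fintype ι] [DecidableEq ι]
    (C : Matrix ι ι ℝ) (b : ι → ℝ) (S : Finset ι) : ℝ :=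
  (fun i : S => b i) ⬝ᵥ (subMat C S)⁻¹ *ᵥ (fun i : S => b i)

/-- `λmin(C,k)`: the smallest eigenvalue of any `k × k` principal submatrix of `C`. -/
noncomputable def lambdaMinK {n : ℕ} (C : Matrix (Fin n) (Fin n) ℝ) (k : ℕ) : ℝ :=
  sInf {x | ∃ S : Finset (Fin n), S.card = k ∧ x = lambdaMin (subMat C S)}

/-- `λmax(C,k)`: the largest eigenvalue of any `k × k` principal submatrix of `C`. -/
noncomputable def lambdaMaxK {n : ℕ} (C : Matrix (Fin n) (Fin n) ℝ) (k : ℕ) : ℝ :=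
  sSup {x | ∃ S : Finset (Fin n), S.card = k ∧ x = lambdaMax (subMat C S)}

/-- `Cov(Res(Z|S), X_m) = b_m - C_{m,S} (C_S)⁻¹ b_S`. -/
noncomputable def resCov {ι : Type*} [Fintype ι] [DecidableEq ι]
    (C : Matrix ι ι ℝ) (b : ι → ℝ) (S : Finset ι) (m : ι) : ℝ :=
  b m - (fun i : S => C m i) ⬝ᵥ ((subMat C S)⁻¹ *ᵥ (fun i : S => b i))

section Aux
variable {ι : Type*} [Fintype ι] [DecidableEq ι]

lemma subMat_posDef {C : Matrix ι ι ℝ} (hC : C.PosDef) (S : Finset ι) :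
    (subMat C S).PosDef := by
  classical
  rw [Matrix.posDef_iff_dotProduct_mulVec]
  have hC := Matrix.posDef_iff_dotProduct_mulVec.mp hC
  constructor
  · ext i j
    have := congrFun (congrFun hC.1 (i : ι)) (j : ι)
    simpa [Matrix.conjTranspose_apply, subMat] using this
  · intro x hx
    set y : ι → ℝ := fun i => if h : i ∈ S then x ⟨i, h⟩ else 0 with hy
    have hy0 : y ≠ 0 := by
      obtain ⟨i, hi⟩ := Function.ne_iff.mp hx
      intro h
      apply hi
      have h2 : y i = 0 := congrFun h i
      simpa [hy, i.2] using h2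
    have key : dotProduct (star x) (subMat C S *ᵥ x)
        = dotProduct (star y) (C *ᵥ y) := by
      simp only [star_trivial, dotProduct, Matrix.mulVec, subMat]
      have inner : ∀ i : ι, (∑ j ∈ S.attach, C i j * x j) = ∑ j, C i j * y j := by
        intro i
        rw [show (∑ j ∈ S.attach, C i (↑j) * x j) = ∑ j ∈ S, C i j * y j from ?_,
          Finset.sum_subset S.subset_univ (fun j _ hj => by simp [hy, hj])]
        rw [← Finset.sum_attach S (fun j => C i j * y j)]
        exact Finset.sum_congr rfl fun j _ => by rw [show y (↑j) = x j from dif_pos j.2]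
      calc ∑ i, x i * ∑ j, (fun i j : S => C i j) i j * x j
          = ∑ i ∈ S.attach, x i * ∑ j ∈ S.attach, C (↑i) (↑j) * x j := by
            rw [Finset.univ_eq_attach]
        _ = ∑ i ∈ S, y i * ∑ j, C i j * y j := by
            rw [← Finset.sum_attach S (fun i => y i * ∑ j, C i j * y j)]
            exact Finset.sum_congr rfl fun i _ => by
              rw [show y (↑i) = x i from dif_pos i.2, inner (↑i)]
        _ = ∑ i, y i * ∑ j, C i j * y j :=
            Finset.sum_subset S.subset_univ (fun i _ hi => by simp [hy, hi])
    rw [key]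
    exact hC.2 hy0

variable {m : Type*} [Fintype m] [DecidableEq m] [Nonempty m]

lemma lambdaMin_pos {A : Matrix m m ℝ} (hA : A.PosDef) : 0 < lambdaMin A := by
  rw [lambdaMin, dif_pos hA.1]
  obtain ⟨i, hi⟩ := exists_eq_ciInf_of_finite (f := hA.1.eigenvalues)
  rw [← hi]; exact hA.eigenvalues_pos i

lemma lambdaMax_pos {A : Matrix m m ℝ} (hA : A.PosDef) : 0 < lambdaMax A := by
  rw [lambdaMax, dif_pos hA.1]
  obtain ⟨i⟩ := ‹Nonempty m›
  exact lt_of_lt_of_le (hA.eigenvalues_pos i)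
    (le_ciSup (Set.Finite.bddAbove (Set.finite_range _)) i)

lemma quad_inv_bounds {A : Matrix m m ℝ} (hA : A.PosDef) (v : m → ℝ) :
    v ⬝ᵥ v / lambdaMax A ≤ v ⬝ᵥ A⁻¹ *ᵥ v ∧ v ⬝ᵥ A⁻¹ *ᵥ v ≤ v ⬝ᵥ v / lambdaMin A := by
  classical
  have hH := hA.1
  set U : Matrix m m ℝ := (Matrix.IsHermitian.eigenvectorUnitary hH : Matrix m m ℝ) with hU
  set lam := hH.eigenvalues with hlamdef
  have hlam : ∀ i, 0 < lam i := hA.eigenvalues_pos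
  have hstarU : star U = Uᵀ := by
    rw [Matrix.star_eq_conjTranspose, Matrix.conjTranspose_eq_transpose_of_trivial]
  have hspec : A = U * Matrix.diagonal lam * Uᵀ := by
    have h := hH.spectral_theorem
    rw [Unitary.conjStarAlgAut_apply, ← hU, hstarU] at h
    rw [h]; rfl
  have h1 : U * Uᵀ = 1 := by
    have := (Matrix.mem_unitaryGroup_iff).mp (Matrix.IsHermitian.eigenvectorUnitary hH).2
    rwa [hstarU] at this
  have h2 : Uᵀ * U = 1 := by
    have := (Matrix.mem_unitaryGroup_iff').mp (Matrix.IsHermitian.eigenvectorUnitary hH).2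
    rwa [hstarU] at this
  have hinv : A⁻¹ = U * Matrix.diagonal (fun i => (lam i)⁻¹) * Uᵀ := by
    apply Matrix.inv_eq_right_inv
    rw [hspec]
    calc (U * Matrix.diagonal lam * Uᵀ) * (U * Matrix.diagonal (fun i => (lam i)⁻¹) * Uᵀ)
        = U * (Matrix.diagonal lam * ((Uᵀ * U) * (Matrix.diagonal (fun i => (lam i)⁻¹) * Uᵀ))) := by
          simp only [Matrix.mul_assoc]
      _ = U * (Matrix.diagonal lam * Matrix.diagonal (fun i => (lam i)⁻¹)) * Uᵀ := by
          rw [h2, Matrix.one_mul]; simp only [Matrix.mul_assoc]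
      _ = U * Uᵀ := by
          rw [Matrix.diagonal_mul_diagonal]
          have : (fun i => lam i * (lam i)⁻¹) = fun _ => (1 : ℝ) := by
            funext i; exact mul_inv_cancel₀ (hlam i).ne'
          rw [this, Matrix.diagonal_one, Matrix.mul_one]
      _ = 1 := h1
  set w : m → ℝ := Uᵀ *ᵥ v with hwdef
  have hvU : v ᵥ* U = w := by
    show v ᵥ* U = Uᵀ *ᵥ v
    conv_lhs => rw [← Matrix.transpose_transpose U]
    rw [Matrix.vecMul_transpose]
  have hquad : v ⬝ᵥ A⁻¹ *ᵥ v = ∑ i, (lam i)⁻¹ * (w i * w i) := by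
    rw [hinv, ← Matrix.mulVec_mulVec, ← Matrix.mulVec_mulVec, Matrix.dotProduct_mulVec, hvU]
    simp only [dotProduct, Matrix.mulVec_diagonal]
    exact Finset.sum_congr rfl fun i _ => by ring
  have hww : v ⬝ᵥ v = ∑ i, w i * w i := by
    have h3 : v ⬝ᵥ v = v ⬝ᵥ ((U * Uᵀ) *ᵥ v) := by rw [h1, Matrix.one_mulVec]
    rw [h3, ← Matrix.mulVec_mulVec, Matrix.dotProduct_mulVec, hvU]
    rfl
  have hmin : 0 < lambdaMin A := lambdaMin_pos hA
  have hmax : 0 < lambdaMax A := lambdaMax_pos hA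
  have hminle : ∀ i, lambdaMin A ≤ lam i := fun i => by
    rw [lambdaMin, dif_pos hA.1]
    exact ciInf_le (Set.Finite.bddBelow (Set.finite_range _)) i
  have hmaxle : ∀ i, lam i ≤ lambdaMax A := fun i => by
    rw [lambdaMax, dif_pos hA.1]
    exact le_ciSup (Set.Finite.bddAbove (Set.finite_range _)) i
  constructor
  · rw [hquad, hww, div_eq_mul_inv, mul_comm, Finset.mul_sum]
    apply Finset.sum_le_sum
    intro i _
    exact mul_le_mul_of_nonneg_right (inv_anti₀ (hlam i) (hmaxle i)) (mul_self_nonneg _)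
  · rw [hquad, hww, div_eq_mul_inv, mul_comm, Finset.mul_sum]
    apply Finset.sum_le_sum
    intro i _
    exact mul_le_mul_of_nonneg_right (inv_anti₀ hmin (hminle i)) (mul_self_nonneg _)

lemma R2_bounds {C : Matrix ι ι ℝ} (hC : C.PosDef) (b : ι → ℝ)
    (S : Finset ι) (hS : S.Nonempty) :
    (∑ i ∈ S, b i ^ 2) / lambdaMax (subMat C S) ≤ R2 C b S ∧
    R2 C b S ≤ (∑ i ∈ S, b i ^ 2) / lambdaMin (subMat C S) := by
  haveI : Nonempty ↥S := Finset.nonempty_coe_sort.mpr hS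
  have hPD := subMat_posDef hC S
  have hb : (fun i : S => b ↑i) ⬝ᵥ (fun i : S => b ↑i) = ∑ i ∈ S, b i ^ 2 := by
    rw [← Finset.sum_attach S (fun i => b i ^ 2)]
    simp only [dotProduct, Finset.univ_eq_attach]
    exact Finset.sum_congr rfl fun i _ => (sq (b ↑i)).symm
  obtain ⟨hlo, hhi⟩ := quad_inv_bounds hPD (fun i : S => b ↑i)
  rw [hb] at hlo hhi
  exact ⟨hlo, hhi⟩

lemma sum_sq_le {ι : Type*} [DecidableEq ι] (b : ι → ℝ) (S T : Finset ι)
    (hcard : T.card = S.card)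
    (hobl : ∀ i ∈ S, ∀ j ∉ S, |b j| ≤ |b i|) :
    ∑ i ∈ T, b i ^ 2 ≤ ∑ i ∈ S, b i ^ 2 := by
  classical
  have hTS : (T \ S).card = (S \ T).card := Finset.card_sdiff_comm hcard
  have h1 : ∑ i ∈ T, b i ^ 2 = ∑ i ∈ T ∩ S, b i ^ 2 + ∑ i ∈ T \ S, b i ^ 2 :=
    (Finset.sum_inter_add_sum_sdiff T S _).symm
  have h2 : ∑ i ∈ S, b i ^ 2 = ∑ i ∈ T ∩ S, b i ^ 2 + ∑ i ∈ S \ T, b i ^ 2 := by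
    rw [Finset.inter_comm]
    exact (Finset.sum_inter_add_sum_sdiff S T _).symm
  rw [h1, h2]
  apply add_le_add_right
  rcases (S \ T).eq_empty_or_nonempty with he | hne
  · have hTe : (T \ S) = ∅ := Finset.card_eq_zero.mp (by rw [hTS, he, Finset.card_empty])
    simp [hTe, he]
  · obtain ⟨i0, hi0, hminim⟩ := Finset.exists_min_image (S \ T) (fun i => b i ^ 2) hne
    have hub : ∀ j ∈ T \ S, b j ^ 2 ≤ b i0 ^ 2 := by
      intro j hj
      have hjS : j ∉ S := (Finset.mem_sdiff.mp hj).2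
      have hi0S : i0 ∈ S := (Finset.mem_sdiff.mp hi0).1
      have habs := hobl i0 hi0S j hjS
      calc b j ^ 2 = |b j| ^ 2 := (sq_abs _).symm
        _ ≤ |b i0| ^ 2 := pow_le_pow_left₀ (abs_nonneg _) habs 2
        _ = b i0 ^ 2 := sq_abs _
    calc ∑ j ∈ T \ S, b j ^ 2 ≤ (T \ S).card • b i0 ^ 2 :=
          Finset.sum_le_card_nsmul _ _ _ hub
      _ = (S \ T).card • b i0 ^ 2 := by rw [hTS]
      _ ≤ ∑ i ∈ S \ T, b i ^ 2 := Finset.card_nsmul_le_sum _ _ _ hminim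

end Aux

/-- Oblivious algorithm guarantee: if `S` consists of the `k` indices with the largest
`|b_i|` values, then `R²(S) ≥ (λmin(C,k)/λmax(C,k)) · OPT`. -/
theorem oblivious_bound {n k : ℕ}
    (C : Matrix (Fin n) (Fin n) ℝ) (b : Fin n → ℝ) (hC : C.PosDef)
    (hk1 : 1 ≤ k) (hkn : k ≤ n)
    (S : Finset (Fin n)) (hScard : S.card = k)
    (hobl : ∀ i ∈ S, ∀ j ∉ S, |b j| ≤ |b i|) :
    lambdaMinK C k / lambdaMaxK C k *
        sSup {x | ∃ T : Finset (Fin n), T.card = k ∧ x = R2 C b T} ≤ R2 C b S := by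
  classical
  have hSne : S.Nonempty := Finset.card_pos.mp (by rw [hScard]; exact hk1)
  haveI : Nonempty ↥S := Finset.nonempty_coe_sort.mpr hSne
  have hne_of_card : ∀ T : Finset (Fin n), T.card = k → T.Nonempty := fun T hT =>
    Finset.card_pos.mp (by rw [hT]; exact hk1)
  -- finiteness
  have hminfin : {x | ∃ T : Finset (Fin n), T.card = k ∧ x = lambdaMin (subMat C T)}.Finite := by
    apply Set.Finite.subset (Set.finite_range fun T : Finset (Fin n) => lambdaMin (subMat C T))
    rintro x ⟨T, _, rfl⟩; exact ⟨T, rfl⟩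
  have hmaxfin : {x | ∃ T : Finset (Fin n), T.card = k ∧ x = lambdaMax (subMat C T)}.Finite := by
    apply Set.Finite.subset (Set.finite_range fun T : Finset (Fin n) => lambdaMax (subMat C T))
    rintro x ⟨T, _, rfl⟩; exact ⟨T, rfl⟩
  have hminne : {x | ∃ T : Finset (Fin n), T.card = k ∧ x = lambdaMin (subMat C T)}.Nonempty :=
    ⟨_, S, hScard, rfl⟩
  have hminKpos : 0 < lambdaMinK C k := by
    rw [lambdaMinK]
    obtain ⟨T, hT, hx⟩ := hminne.csInf_mem hminfin
    rw [hx]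
    haveI : Nonempty ↥T := Finset.nonempty_coe_sort.mpr (hne_of_card T hT)
    exact lambdaMin_pos (subMat_posDef hC T)
  have hmaxKpos : 0 < lambdaMaxK C k := by
    rw [lambdaMaxK]
    have hmem : lambdaMax (subMat C S) ∈
        {x | ∃ T : Finset (Fin n), T.card = k ∧ x = lambdaMax (subMat C T)} := ⟨S, hScard, rfl⟩
    exact lt_of_lt_of_le (lambdaMax_pos (subMat_posDef hC S)) (le_csSup hmaxfin.bddAbove hmem)
  have hR2S_lo : (∑ i ∈ S, b i ^ 2) / lambdaMax (subMat C S) ≤ R2 C b S :=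
    (R2_bounds hC b S hSne).1
  have hR2Snn : 0 ≤ R2 C b S :=
    le_trans (div_nonneg (Finset.sum_nonneg fun i _ => sq_nonneg _)
      (lambdaMax_pos (subMat_posDef hC S)).le) hR2S_lo
  -- key bound for each T
  have key : ∀ T : Finset (Fin n), T.card = k →
      lambdaMinK C k * R2 C b T ≤ lambdaMaxK C k * R2 C b S := by
    intro T hT
    have hTne := hne_of_card T hT
    haveI : Nonempty ↥T := Finset.nonempty_coe_sort.mpr hTne
    have hPDT := subMat_posDef hC T
    have hPDS := subMat_posDef hC S
    have hminT : 0 < lambdaMin (subMat C T) := lambdaMin_pos hPDT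
    have hmaxS : 0 < lambdaMax (subMat C S) := lambdaMax_pos hPDS
    have hR2T : R2 C b T ≤ (∑ i ∈ T, b i ^ 2) / lambdaMin (subMat C T) :=
      (R2_bounds hC b T hTne).2
    have hQ : ∑ i ∈ T, b i ^ 2 ≤ ∑ i ∈ S, b i ^ 2 :=
      sum_sq_le b S T (by rw [hT, hScard]) hobl
    have hmin_le : lambdaMinK C k ≤ lambdaMin (subMat C T) :=
      csInf_le hminfin.bddBelow ⟨T, hT, rfl⟩
    have hmax_ge : lambdaMax (subMat C S) ≤ lambdaMaxK C k :=
      le_csSup hmaxfin.bddAbove ⟨S, hScard, rfl⟩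
    calc lambdaMinK C k * R2 C b T
        ≤ lambdaMinK C k * ((∑ i ∈ T, b i ^ 2) / lambdaMin (subMat C T)) := by
          apply mul_le_mul_of_nonneg_left hR2T hminKpos.le
      _ ≤ lambdaMin (subMat C T) * ((∑ i ∈ T, b i ^ 2) / lambdaMin (subMat C T)) := by
          apply mul_le_mul_of_nonneg_right hmin_le
          exact div_nonneg (Finset.sum_nonneg fun i _ => sq_nonneg _) hminT.le
      _ = ∑ i ∈ T, b i ^ 2 := by field_simp
      _ ≤ ∑ i ∈ S, b i ^ 2 := hQ
      _ ≤ lambdaMax (subMat C S) * R2 C b S := by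
          rw [← div_le_iff₀' hmaxS]; exact hR2S_lo
      _ ≤ lambdaMaxK C k * R2 C b S := mul_le_mul_of_nonneg_right hmax_ge hR2Snn
  have hsup : sSup {x | ∃ T : Finset (Fin n), T.card = k ∧ x = R2 C b T}
      ≤ lambdaMaxK C k * R2 C b S / lambdaMinK C k := by
    apply Real.sSup_le
    · rintro x ⟨T, hT, rfl⟩
      rw [le_div_iff₀ hminKpos, mul_comm]
      exact key T hT
    · exact div_nonneg (mul_nonneg hmaxKpos.le hR2Snn) hminKpos.le
  calc lambdaMinK C k / lambdaMaxK C k *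
        sSup {x | ∃ T : Finset (Fin n), T.card = k ∧ x = R2 C b T}
      ≤ lambdaMinK C k / lambdaMaxK C k * (lambdaMaxK C k * R2 C b S / lambdaMinK C k) := by
        apply mul_le_mul_of_nonneg_left hsup (div_nonneg hminKpos.le hmaxKpos.le)
    _ = R2 C b S := by field_simp
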